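/- Let A be a commutative unital complex Banach algebra which is semisimple (its Gelfand transform is injective) and regular on its character space X, in the sense that for every weak*-closed subset E of X and every character φ ∈ X with φ ∉ E there exists a ∈ A with φ(a) = 1 and ψ(a) = 0 for all ψ ∈ E. Let B be a finite group acting on A via a homomorphism into the group of continuous (bounded) algebra automorphisms of A, and let A^B = { a ∈ A : β(a) = a for all β ∈ B } be the fixed-point subalgebra. Then every character of A^B (every unital multiplicative linear functional χ : A^B → ℂ) is the restriction to A^B of some character of A; consequently the character space of A^B is identified with the orbit space X/B. -/

import Mathlib

theorem stmt_18 (A : Type*) [NormedCommRing A] [NormedAlgebra ℂ A] [CompleteSpace A]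
    -- semisimplicity: the Gelfand transform is injective
    (hss : Function.Injective ⇑(WeakDual.gelfandTransform ℂ A))
    -- regularity on the character space
    (hreg : ∀ E : Set (WeakDual.characterSpace ℂ A), IsClosed E →
      ∀ φ : WeakDual.characterSpace ℂ A, φ ∉ E →
        ∃ a : A, φ a = 1 ∧ ∀ ψ ∈ E, ψ a = 0)
    -- a finite group acting by continuous algebra automorphisms
    (B : Type*) [Group B] [Finite B]
    (π : B →* (A ≃ₐ[ℂ] A)) (hcont : ∀ β : B, Continuous ⇑(π β))
    -- the fixed-point subalgebra
    (S : Subalgebra ℂ A) (hS : ∀ a : A, a ∈ S ↔ ∀ β : B, π β a = a)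
    -- a character of the fixed-point subalgebra
    (χ : S →ₐ[ℂ] ℂ) :
    ∃ ψ : WeakDual.characterSpace ℂ A, ∀ a : S, χ a = ψ (a : A) := by
  classical
  haveI : Fintype B := Fintype.ofFinite B
  set n : ℕ := Fintype.card B with hn
  have hn0 : (n : ℂ) ≠ 0 := Nat.cast_ne_zero.mpr Fintype.card_ne_zero
  -- the averaging projection onto the fixed-point algebra
  set Z : A →ₗ[ℂ] A := (n : ℂ)⁻¹ • (∑ β : B, (π β).toLinearMap) with hZdef
  have hZapp : ∀ a : A, Z a = (n : ℂ)⁻¹ • ∑ β : B, π β a := by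
    intro a; simp [hZdef, LinearMap.sum_apply]
  have hcomp : ∀ (γ β : B) (a : A), π γ (π β a) = π (γ * β) a := by
    intro γ β a; rw [map_mul]; rfl
  have hZS : ∀ a : A, Z a ∈ S := by
    intro a
    rw [hS]
    intro γ
    rw [hZapp, map_smul, map_sum]
    congr 1
    calc ∑ β : B, π γ (π β a) = ∑ β : B, π (γ * β) a := by
          simp only [hcomp]
      _ = ∑ β : B, π β a := Equiv.sum_comp (Equiv.mulLeft γ) (fun β => π β a)
  have hZfix : ∀ a : A, a ∈ S → Z a = a := by
    intro a ha
    rw [hZapp]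
    have : ∀ β : B, π β a = a := (hS a).1 ha
    simp only [this, Finset.sum_const, Finset.card_univ, ← hn]
    rw [← Nat.cast_smul_eq_nsmul ℂ, smul_smul, inv_mul_cancel₀ hn0, one_smul]
  have hZmul : ∀ (a k : A), k ∈ S → Z (a * k) = Z a * k := by
    intro a k hk
    rw [hZapp, hZapp]
    have : ∀ β : B, π β (a * k) = π β a * k := by
      intro β; rw [map_mul, (hS k).1 hk β]
    simp only [this, ← Finset.sum_mul, smul_mul_assoc]
  -- the ideal generated by the kernel of χ
  set sset : Set A := Subtype.val '' {x : S | χ x = 0} with hsset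
  set I : Ideal A := Ideal.span sset with hI
  have hmemS : ∀ a ∈ sset, a ∈ S := by
    rintro a ⟨x, _, rfl⟩; exact x.2
  have hchi0 : ∀ a, ∀ h : a ∈ sset, χ ⟨a, hmemS a h⟩ = 0 := by
    rintro a ⟨x, hx, rfl⟩
    exact hx
  have h1 : (1 : A) ∉ I := by
    intro h1
    obtain ⟨c, hsupp, hsum⟩ := Submodule.mem_span_set.mp h1
    -- lift the combination to S
    set g : A → S := fun i =>
      if h : i ∈ S then ⟨Z (c i) * i, S.mul_mem (hZS _) h⟩ else 0 with hg
    set u : S := ∑ i ∈ c.support, g i with hu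
    have huval : (u : A) = 1 := by
      have : (u : A) = ∑ i ∈ c.support, Z (c i) * i := by
        rw [hu, AddSubmonoidClass.coe_finset_sum]
        refine Finset.sum_congr rfl fun i hi => ?_
        have hiS : i ∈ S := hmemS i (hsupp hi)
        simp [hg, dif_pos hiS]
      rw [this]
      have : ∑ i ∈ c.support, Z (c i) * i = Z (∑ i ∈ c.support, c i * i) := by
        rw [map_sum]
        exact (Finset.sum_congr rfl fun i hi =>
          (hZmul (c i) i (hmemS i (hsupp hi)))).symm
      rw [this]
      have : (∑ i ∈ c.support, c i * i) = 1 := by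
        rw [← hsum, Finsupp.sum]
        exact Finset.sum_congr rfl fun i _ => (smul_eq_mul (c i) i).symm ▸ rfl
      rw [this]
      exact hZfix 1 S.one_mem
    have hu1 : u = 1 := Subtype.ext (by rw [huval]; rfl)
    have hchiu : χ u = 0 := by
      rw [hu, map_sum]
      refine Finset.sum_eq_zero fun i hi => ?_
      have hsi : i ∈ sset := hsupp hi
      have hiS : i ∈ S := hmemS i hsi
      have : g i = (⟨Z (c i), hZS _⟩ : S) * ⟨i, hiS⟩ :=
        Subtype.ext (by simp [hg, dif_pos hiS])
      rw [this, map_mul, hchi0 i hsi, mul_zero]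
    rw [hu1, map_one] at hchiu
    exact one_ne_zero hchiu
  obtain ⟨M, hM, hIM⟩ := Ideal.exists_le_maximal I ((Ideal.ne_top_iff_one I).mpr h1)
  haveI := hM
  refine ⟨M.toCharacterSpace, fun a => ?_⟩
  have hmem : ((a : A) - algebraMap ℂ A (χ a)) ∈ M := by
    apply hIM
    apply Ideal.subset_span
    refine ⟨a - algebraMap ℂ S (χ a), ?_, ?_⟩
    · simp [Set.mem_setOf_eq, map_sub, AlgHom.commutes]
    · simp
  have := M.toCharacterSpace_apply_eq_zero_of_mem hmem
  rw [map_sub, AlgHomClass.commutes, sub_eq_zero] at this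
  exact this.symm
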